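/- There exist no rational functions p, q ∈ F(u,v) over the field F = ℤ/pℤ (p an odd prime) satisfying (u²−1)·p(u,v)² + (v²−1)·q(u,v)² = 1; consequently the quaternion algebra ((u²−1, v²−1) / F(u,v)) is a division algebra. -/

import Mathlib

noncomputable abbrev Kp (p : ℕ) : Type := FractionRing (MvPolynomial (Fin 2) (ZMod p))

open Polynomial

lemma key1 {F : Type*} [Field F] (h2 : (2:F) ≠ 0) (q r : F[X])
    (h : (X^2 - 1) * q^2 = r^2) : q = 0 := by
  by_contra hq
  have hx2 : (X^2 - 1 : F[X]) = (X - C 1) * (X + C 1) := by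
    simp only [map_one]; ring
  have hX1 : (X^2 - 1 : F[X]) ≠ 0 := fun h0 => by
    simpa using congrArg (eval 0) h0
  have hr : r ≠ 0 := by
    rintro rfl
    have h0 : (X^2-1 : F[X])*q^2 = 0 := by simpa using h
    rcases mul_eq_zero.mp h0 with h' | h'
    · exact hX1 h'
    · exact hq (pow_eq_zero_iff two_ne_zero |>.mp h')
  have e1 : rootMultiplicity 1 ((X^2 - 1 : F[X]) * q^2)
      = 1 + 2 * rootMultiplicity 1 q := by
    rw [rootMultiplicity_mul (mul_ne_zero hX1 (pow_ne_zero _ hq)), hx2,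
      rootMultiplicity_mul (by rw [← hx2]; exact hX1), sq,
      rootMultiplicity_mul (mul_ne_zero hq hq),
      rootMultiplicity_X_sub_C_self,
      rootMultiplicity_eq_zero (by
        simp only [IsRoot, eval_add, eval_X, eval_one, eval_C]
        intro h'; exact h2 (by linear_combination h'))]
    ring
  have e2 : rootMultiplicity 1 (r^2 : F[X]) = 2 * rootMultiplicity 1 r := by
    rw [sq, rootMultiplicity_mul (mul_ne_zero hr hr)]; ring
  rw [h, e2] at e1
  omega

lemma key2 {F : Type*} [Field F] (h2 : (2:F) ≠ 0) (c a b : Polynomial F[X])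
    (h : (X^2 - 1) * a^2 + C (X^2 - 1) * b^2 = c^2) : c = 0 := by
  have H : ∀ n (c a b : Polynomial F[X]), c.natDegree = n →
      ((X^2 - 1) * a^2 + C (X^2 - 1) * b^2 = c^2) → c = 0 := by
    intro n
    induction n using Nat.strong_induction_on with
    | _ n ih =>
    intro c a b hn h
    subst hn
    by_cases hc : c = 0
    · exact hc
    exfalso
    -- evaluate at X = 1 (outer variable)
    have hev : (X^2 - 1 : F[X]) * (b.eval 1)^2 = (c.eval 1)^2 := by
      have := congrArg (Polynomial.eval (1 : F[X])) h
      simpa using this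
    have hb1 : b.eval 1 = 0 := key1 h2 _ _ hev
    have hc1 : c.eval 1 = 0 := by
      have : (c.eval 1)^2 = 0 := by rw [← hev, hb1]; ring
      exact pow_eq_zero_iff two_ne_zero |>.mp this
    have hXd : (X - C 1 : Polynomial F[X]) ∣ c := dvd_iff_isRoot.mpr hc1
    have hXdb : (X - C 1 : Polynomial F[X]) ∣ b := dvd_iff_isRoot.mpr hb1
    obtain ⟨c1, hc1'⟩ := hXd
    obtain ⟨b1, hb1'⟩ := hXdb
    have hprime : Prime (X - C 1 : Polynomial F[X]) := prime_X_sub_C 1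
    have hXn : (X - C 1 : Polynomial F[X]) ≠ 0 := hprime.ne_zero
    have h2X : ((1:F[X]) + 1) ≠ 0 := by
      intro h'
      exact h2 (by simpa [one_add_one_eq_two] using congrArg (Polynomial.eval (1:F)) h')
    have hdvd : (X - C 1 : Polynomial F[X]) ∣ (X + C 1) * a^2 := by
      have heq : (X - C 1 : Polynomial F[X]) * ((X + C 1) * a^2)
          = c^2 - C (X^2 - 1) * b^2 := by
        rw [← h]; simp only [map_one]; ring
      have hd2 : (X - C 1 : Polynomial F[X])^2 ∣ (X - C 1) * ((X + C 1) * a^2) := by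
        rw [heq, hc1', hb1']
        exact ⟨c1^2 - C (X^2 - 1) * b1^2, by ring⟩
      rw [sq] at hd2
      exact (mul_dvd_mul_iff_left hXn).mp hd2
    have hda : (X - C 1 : Polynomial F[X]) ∣ a := by
      rcases hprime.dvd_mul.mp hdvd with h' | h'
      · exfalso
        obtain ⟨t, ht⟩ := h'
        exact h2X (by simpa using congrArg (Polynomial.eval (1 : F[X])) ht)
      · exact hprime.dvd_of_dvd_pow h'
    obtain ⟨a1, ha1'⟩ := hda
    have hnew : (X^2 - 1) * a1^2 + C (X^2 - 1) * b1^2 = c1^2 := by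
      refine mul_left_cancel₀ (pow_ne_zero 2 hXn) ?_
      rw [ha1', hb1', hc1'] at h
      linear_combination h
    have hc1ne : c1 ≠ 0 := fun h' => hc (by rw [hc1', h', mul_zero])
    have hdeg : c1.natDegree < c.natDegree := by
      rw [hc1', natDegree_mul hXn hc1ne, natDegree_X_sub_C]
      omega
    exact hc (ih c1.natDegree hdeg c1 a1 b1 rfl hnew ▸ (hc1'.trans (by rw [ih c1.natDegree hdeg c1 a1 b1 rfl hnew, mul_zero])))
  exact H _ c a b rfl h

noncomputable def phi (F : Type*) [CommSemiring F] :
    MvPolynomial (Fin 2) F ≃ₐ[F] Polynomial (Polynomial F) :=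
  (MvPolynomial.finSuccEquiv F 1).trans <| Polynomial.mapAlgEquiv <|
    (MvPolynomial.finSuccEquiv F 0).trans <| Polynomial.mapAlgEquiv <|
      MvPolynomial.isEmptyAlgEquiv F (Fin 0)

lemma phi_X0 (F : Type*) [CommSemiring F] :
    phi F (MvPolynomial.X 0) = Polynomial.X := by
  rw [phi]
  simp only [AlgEquiv.trans_apply, MvPolynomial.finSuccEquiv_X_zero,
    Polynomial.coe_mapAlgEquiv, Polynomial.map_X]

lemma phi_X1 (F : Type*) [CommSemiring F] :
    phi F (MvPolynomial.X 1) = Polynomial.C Polynomial.X := by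
  have h1 : (1 : Fin 2) = (0 : Fin 1).succ := rfl
  rw [phi, h1]
  simp only [AlgEquiv.trans_apply, MvPolynomial.finSuccEquiv_X_succ,
    Polynomial.coe_mapAlgEquiv, Polynomial.map_C]
  congr 1
  rw [show ((((MvPolynomial.finSuccEquiv F 0).trans
      (Polynomial.mapAlgEquiv (MvPolynomial.isEmptyAlgEquiv F (Fin 0)))) :
      MvPolynomial (Fin 1) F →+* Polynomial F) (MvPolynomial.X 0))
      = ((MvPolynomial.finSuccEquiv F 0).trans
      (Polynomial.mapAlgEquiv (MvPolynomial.isEmptyAlgEquiv F (Fin 0)))) (MvPolynomial.X 0)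
      from rfl]
  rw [AlgEquiv.trans_apply, MvPolynomial.finSuccEquiv_X_zero,
    Polynomial.coe_mapAlgEquiv, Polynomial.map_X]

lemma key3 {F : Type*} [Field F] (h2 : (2:F) ≠ 0) (c a b : MvPolynomial (Fin 2) F)
    (h : (MvPolynomial.X 0 ^2 - 1) * a^2 + (MvPolynomial.X 1 ^2 - 1) * b^2 = c^2) :
    c = 0 := by
  have hphi := congrArg (phi F) h
  simp only [map_add, map_mul, map_pow, map_sub, map_one, phi_X0, phi_X1] at hphi
  have : Polynomial.C (Polynomial.X ^ 2 - 1 : Polynomial F) =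
      (Polynomial.C Polynomial.X)^2 - 1 := by
    simp [map_sub, map_pow]
  rw [← this] at hphi
  have := key2 h2 (phi F c) (phi F a) (phi F b) hphi
  have := congrArg (phi F).symm this
  simpa using this

lemma two_ne_zero_ZMod (p : ℕ) [Fact p.Prime] (hp : Odd p) : (2 : ZMod p) ≠ 0 := by
  intro h
  have : (p : ℕ) ∣ 2 := by
    have := (CharP.cast_eq_zero_iff (ZMod p) p 2).mp (by exact_mod_cast h)
    exact this
  have hp2 : p = 2 := (Nat.prime_dvd_prime_iff_eq Fact.out Nat.prime_two).mp this
  rw [hp2] at hp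
  simp [Nat.odd_iff] at hp

lemma no_sol (p : ℕ) [Fact p.Prime] (hp : Odd p) (u v : Kp p)
    (hu : u = algebraMap (MvPolynomial (Fin 2) (ZMod p)) (Kp p) (MvPolynomial.X 0))
    (hv : v = algebraMap (MvPolynomial (Fin 2) (ZMod p)) (Kp p) (MvPolynomial.X 1)) :
    ¬ ∃ x y : Kp p, (u ^ 2 - 1) * x ^ 2 + (v ^ 2 - 1) * y ^ 2 = 1 := by
  set S := MvPolynomial (Fin 2) (ZMod p)
  set f := algebraMap S (Kp p) with hf
  have finj : Function.Injective f := IsFractionRing.injective S (Kp p)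
  rintro ⟨x, y, hxy⟩
  obtain ⟨a1, b1, hb1, hx⟩ := IsFractionRing.div_surjective (A := S) x
  obtain ⟨a2, b2, hb2, hy⟩ := IsFractionRing.div_surjective (A := S) y
  have hb1' : b1 ≠ 0 := nonZeroDivisors.ne_zero hb1
  have hb2' : b2 ≠ 0 := nonZeroDivisors.ne_zero hb2
  have hB1 : f b1 ≠ 0 := fun h => hb1' (finj (by simpa using h))
  have hB2 : f b2 ≠ 0 := fun h => hb2' (finj (by simpa using h))
  rw [← hx, ← hy] at hxy
  have hK : (u^2 - 1) * (f a1 * f b2)^2 + (v^2 - 1) * (f a2 * f b1)^2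
      = (f b1 * f b2)^2 := by
    rw [← hf] at hxy
    field_simp at hxy
    linear_combination hxy
  rw [hu, hv] at hK
  have hS : (MvPolynomial.X 0 ^ 2 - 1) * (a1 * b2)^2
      + (MvPolynomial.X 1 ^ 2 - 1) * (a2 * b1)^2 = (b1 * b2)^2 := by
    apply finj
    simpa only [map_add, map_mul, map_pow, map_sub, map_one] using hK
  have := key3 (two_ne_zero_ZMod p hp) _ _ _ hS
  exact mul_ne_zero hb1' hb2' this

lemma sol_of_sq {K : Type*} [Field K] {a b s : K} (ha : a ≠ 0) (h : a = s^2) :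
    ∃ x y : K, a * x^2 + b * y^2 = 1 := by
  have hs : s ≠ 0 := fun h' => ha (by rw [h, h', zero_pow two_ne_zero])
  exact ⟨s⁻¹, 0, by field_simp [h]; simp [h]⟩

lemma sol_of_norm {K : Type*} [Field K] {a b s t : K} (ha : a ≠ 0) (hb : b ≠ 0)
    (h2 : (2:K) ≠ 0) (h : b = s^2 - a * t^2) :
    ∃ x y : K, a * x^2 + b * y^2 = 1 := by
  by_cases hs : s = 0
  · subst hs
    have ht : t ≠ 0 := fun h' => hb (by rw [h, h']; ring)
    refine ⟨(1 + a⁻¹)/2, (a⁻¹ - 1)/(2*t), ?_⟩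
    rw [h]
    field_simp
    ring
  · exact ⟨t/s, 1/s, by field_simp [h]; rw [h]; ring⟩

lemma quat_unit {K : Type*} [Field K] {a b : K} (ha : a ≠ 0) (hb : b ≠ 0)
    (h2 : (2:K) ≠ 0)
    (hns : ¬ ∃ x y : K, a * x^2 + b * y^2 = 1) :
    ∀ z : QuaternionAlgebra K a 0 b, z ≠ 0 → IsUnit z := by
  intro z hz
  set n : K := z.re^2 - a*z.imI^2 - b*z.imJ^2 + a*b*z.imK^2 with hn
  have hzs : z * star z = (n : QuaternionAlgebra K a 0 b) := by
    ext <;>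
      simp only [QuaternionAlgebra.re_mul, QuaternionAlgebra.imI_mul,
        QuaternionAlgebra.imJ_mul, QuaternionAlgebra.imK_mul,
        QuaternionAlgebra.re_star, QuaternionAlgebra.imI_star,
        QuaternionAlgebra.imJ_star, QuaternionAlgebra.imK_star,
        QuaternionAlgebra.re_coe, QuaternionAlgebra.imI_coe,
        QuaternionAlgebra.imJ_coe, QuaternionAlgebra.imK_coe, hn] <;>
      ring
  have hsz : star z * z = (n : QuaternionAlgebra K a 0 b) := by
    ext <;>
      simp only [QuaternionAlgebra.re_mul, QuaternionAlgebra.imI_mul,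
        QuaternionAlgebra.imJ_mul, QuaternionAlgebra.imK_mul,
        QuaternionAlgebra.re_star, QuaternionAlgebra.imI_star,
        QuaternionAlgebra.imJ_star, QuaternionAlgebra.imK_star,
        QuaternionAlgebra.re_coe, QuaternionAlgebra.imI_coe,
        QuaternionAlgebra.imJ_coe, QuaternionAlgebra.imK_coe, hn] <;>
      ring
  have hnne : n ≠ 0 := by
    intro h0
    apply hns
    have hre : z.re^2 - a*z.imI^2 = b*(z.imJ^2 - a*z.imK^2) := by
      have : n = 0 := h0
      rw [hn] at this
      linear_combination this
    by_cases hd : z.imJ^2 - a*z.imK^2 = 0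
    · by_cases hk : z.imK = 0
      · have hj : z.imJ = 0 := by
          have : z.imJ^2 = 0 := by linear_combination hd + a * z.imK * hk
          exact pow_eq_zero_iff two_ne_zero |>.mp this
        by_cases hi : z.imI = 0
        · exfalso
          have hre0 : z.re = 0 := by
            have : z.re^2 = 0 := by
              linear_combination hre + b * hd + (a * z.imI) * hi
            exact pow_eq_zero_iff two_ne_zero |>.mp this
          exact hz (QuaternionAlgebra.ext hre0 hi hj hk)
        · exact sol_of_sq ha (show a = (z.re/z.imI)^2 by
            field_simp
            linear_combination -hre - b * hd)
      · exact sol_of_sq ha (show a = (z.imJ/z.imK)^2 by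
          field_simp
          linear_combination -hd)
    · refine sol_of_norm ha hb h2
        (s := (z.re*z.imJ + a*z.imI*z.imK)/(z.imJ^2 - a*z.imK^2))
        (t := (z.re*z.imK + z.imI*z.imJ)/(z.imJ^2 - a*z.imK^2)) ?_
      field_simp
      linear_combination -(z.imJ^2 - a*z.imK^2) * hre
  refine ⟨⟨z, (n⁻¹ : K) • star z, ?_, ?_⟩, rfl⟩
  · rw [mul_smul_comm, hzs, ← QuaternionAlgebra.coe_mul_eq_smul,
      ← QuaternionAlgebra.coe_mul, inv_mul_cancel₀ hnne, QuaternionAlgebra.coe_one]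
  · rw [smul_mul_assoc, hsz, ← QuaternionAlgebra.coe_mul_eq_smul,
      ← QuaternionAlgebra.coe_mul, inv_mul_cancel₀ hnne, QuaternionAlgebra.coe_one]

theorem quaternion_division_algebra (p : ℕ) [Fact p.Prime] (hp : Odd p)
    (u v : Kp p)
    (hu : u = algebraMap (MvPolynomial (Fin 2) (ZMod p)) (Kp p) (MvPolynomial.X 0))
    (hv : v = algebraMap (MvPolynomial (Fin 2) (ZMod p)) (Kp p) (MvPolynomial.X 1)) :
    (¬ ∃ x y : Kp p, (u ^ 2 - 1) * x ^ 2 + (v ^ 2 - 1) * y ^ 2 = 1) ∧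
    (∀ z : QuaternionAlgebra (Kp p) (u ^ 2 - 1) 0 (v ^ 2 - 1), z ≠ 0 → IsUnit z) := by
  set S := MvPolynomial (Fin 2) (ZMod p)
  have finj : Function.Injective (algebraMap S (Kp p)) :=
    IsFractionRing.injective S (Kp p)
  have hcinj : Function.Injective
      ((algebraMap S (Kp p)).comp (MvPolynomial.C : ZMod p →+* S)) :=
    finj.comp (MvPolynomial.C_injective _ _)
  haveI : CharP (Kp p) p :=
    charP_of_injective_ringHom hcinj p
  have h2K : (2 : Kp p) ≠ 0 := by
    intro h
    have hdvd : (p : ℕ) ∣ 2 := (CharP.cast_eq_zero_iff (Kp p) p 2).mp (by exact_mod_cast h)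
    have hp2 : p = 2 := (Nat.prime_dvd_prime_iff_eq Fact.out Nat.prime_two).mp hdvd
    rw [hp2] at hp
    simp [Nat.odd_iff] at hp
  have hXne : ∀ i : Fin 2, (MvPolynomial.X i ^ 2 - 1 : S) ≠ 0 := by
    intro i h
    have := congrArg (MvPolynomial.eval (fun _ => (0 : ZMod p))) h
    simp at this
  have ha : u ^ 2 - 1 ≠ 0 := by
    rw [hu]
    intro h
    refine hXne 0 (finj ?_)
    rw [map_sub, map_pow, map_one, map_zero, h]
  have hb : v ^ 2 - 1 ≠ 0 := by
    rw [hv]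
    intro h
    refine hXne 1 (finj ?_)
    rw [map_sub, map_pow, map_one, map_zero, h]
  exact ⟨no_sol p hp u v hu hv, quat_unit ha hb h2K (no_sol p hp u v hu hv)⟩
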